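/- arXiv:2510.19591 — 3 statements merged into one kernel-verified Lean document; each statement's English description precedes it below -/
import Mathlib

section
/- In the discriminatory price auction, the expected utility of bidding b against a random adversary bid vector β with marginal CDFs F_k(x) = P(β_k ≤ x) equals the sum over i from 1 to K of F_{K-i+1}(b_i)·(v_i - b_i). Formally, E[Σ_{i=1}^{x(b,β)} (v_i - b_i)] = Σ_{i=1}^K P(β_{K-i+1} ≤ b_i)·(v_i - b_i). -/
open scoped Classical
open MeasureTheory

/-- Allocation in the K-item standard auction. -/
noncomputable def alloc (K : ℕ) (b β : ℕ → ℝ) : ℕ :=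
  Nat.findGreatest (fun k => ∀ j, 1 ≤ j → j ≤ k → β (K + 1 - j) ≤ b j) K

lemma fg_inst (P : ℕ → Prop) (i1 i2 : DecidablePred P) (n : ℕ) :
    @Nat.findGreatest P i1 n = @Nat.findGreatest P i2 n := by
  rw [Subsingleton.elim i1 i2]

lemma alloc_eq (K : ℕ) (b γ : ℕ → ℝ)
    (inst : DecidablePred (fun k => ∀ j, 1 ≤ j → j ≤ k → γ (K + 1 - j) ≤ b j)) :
    alloc K b γ
      = @Nat.findGreatest (fun k => ∀ j, 1 ≤ j → j ≤ k → γ (K + 1 - j) ≤ b j) inst K := by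
  unfold alloc
  exact fg_inst _ _ _ K

lemma alloc_le (K : ℕ) (b γ : ℕ → ℝ) : alloc K b γ ≤ K := by
  rw [alloc_eq K b γ (fun _ => Classical.propDecidable _)]
  exact @Nat.findGreatest_le _ (fun _ => Classical.propDecidable _) K

lemma alloc_key (K : ℕ) (b : ℕ → ℝ) (γ : ℕ → ℝ)
    (hb : ∀ i j, 1 ≤ i → i ≤ j → j ≤ K → b j ≤ b i)
    (hγ : ∀ i j, 1 ≤ i → i ≤ j → j ≤ K → γ j ≤ γ i)
    {i : ℕ} (hi1 : 1 ≤ i) (hiK : i ≤ K) :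
    i ≤ alloc K b γ ↔ γ (K - i + 1) ≤ b i := by
  have hsub : K - i + 1 = K + 1 - i := by omega
  set inst : DecidablePred (fun k => ∀ j, 1 ≤ j → j ≤ k → γ (K + 1 - j) ≤ b j) :=
    fun _ => Classical.propDecidable _ with hinst
  rw [hsub, alloc_eq K b γ inst]
  constructor
  · intro h
    have h0 : @Nat.findGreatest (fun k => ∀ j, 1 ≤ j → j ≤ k → γ (K + 1 - j) ≤ b j) inst K ≠ 0 := by
      omega
    have hspec := @Nat.findGreatest_of_ne_zero _ _ inst K rfl h0
    exact hspec i hi1 h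
  · intro h
    refine @Nat.le_findGreatest _ _ inst K hiK ?_
    intro j hj1 hji
    have h1 : b i ≤ b j := hb j i hj1 hji hiK
    have h2 : γ (K + 1 - j) ≤ γ (K + 1 - i) :=
      hγ (K + 1 - i) (K + 1 - j) (by omega) (by omega) (by omega)
    linarith

/-- In the discriminatory price auction, the expected utility of bidding `b`
equals `∑_{i=1}^K F_{K-i+1}(b_i) (v_i - b_i)` where `F_k` is the marginal CDF
of the adversary's k-th (sorted) bid. -/
theorem discriminatory_expected_utility
    {Ω : Type*} [MeasurableSpace Ω] (μ : Measure Ω) [IsProbabilityMeasure μ]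
    (K : ℕ) (v b : ℕ → ℝ) (β : Ω → ℕ → ℝ)
    (hmeas : ∀ k, Measurable fun ω => β ω k)
    (hv : ∀ i j, 1 ≤ i → i ≤ j → j ≤ K → v j ≤ v i)
    (hv01 : ∀ i, 1 ≤ i → i ≤ K → v i ∈ Set.Icc (0:ℝ) 1)
    (hb : ∀ i j, 1 ≤ i → i ≤ j → j ≤ K → b j ≤ b i)
    (hb01 : ∀ i, 1 ≤ i → i ≤ K → b i ∈ Set.Icc (0:ℝ) 1)
    (hβ : ∀ ω, ∀ i j, 1 ≤ i → i ≤ j → j ≤ K → β ω j ≤ β ω i)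
    (hβ01 : ∀ ω, ∀ i, 1 ≤ i → i ≤ K → β ω i ∈ Set.Icc (0:ℝ) 1) :
    ∫ ω, (∑ i ∈ Finset.Icc 1 (alloc K b (β ω)), (v i - b i)) ∂μ
      = ∑ i ∈ Finset.Icc 1 K, (μ {ω | β ω (K - i + 1) ≤ b i}).toReal * (v i - b i) := by
  have hsets : ∀ i, MeasurableSet {ω | β ω (K - i + 1) ≤ b i} := fun i =>
    measurableSet_le (hmeas _) measurable_const
  have hpt : ∀ ω, (∑ i ∈ Finset.Icc 1 (alloc K b (β ω)), (v i - b i))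
      = ∑ i ∈ Finset.Icc 1 K,
          Set.indicator {ω' | β ω' (K - i + 1) ≤ b i} (fun _ => v i - b i) ω := by
    intro ω
    have halloc : alloc K b (β ω) ≤ K := alloc_le K b (β ω)
    have hfe : Finset.Icc 1 (alloc K b (β ω))
        = (Finset.Icc 1 K).filter (fun i => β ω (K - i + 1) ≤ b i) := by
      ext i
      simp only [Finset.mem_filter, Finset.mem_Icc]
      constructor
      · rintro ⟨h1, h2⟩
        have h2' := le_trans h2 halloc
        exact ⟨⟨h1, h2'⟩, (alloc_key K b (β ω) hb (hβ ω) h1 h2').1 h2⟩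
      · rintro ⟨⟨h1, h2⟩, h3⟩
        exact ⟨h1, (alloc_key K b (β ω) hb (hβ ω) h1 h2).2 h3⟩
    rw [hfe, Finset.sum_filter]
    refine Finset.sum_congr rfl fun i hi => ?_
    simp [Set.indicator, Set.mem_setOf_eq]
  calc ∫ ω, (∑ i ∈ Finset.Icc 1 (alloc K b (β ω)), (v i - b i)) ∂μ
      = ∫ ω, (∑ i ∈ Finset.Icc 1 K,
          Set.indicator {ω' | β ω' (K - i + 1) ≤ b i} (fun _ => v i - b i) ω) ∂μ := by
        exact integral_congr_ae (Filter.Eventually.of_forall hpt)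
    _ = ∑ i ∈ Finset.Icc 1 K,
          ∫ ω, Set.indicator {ω' | β ω' (K - i + 1) ≤ b i} (fun _ => v i - b i) ω ∂μ := by
        exact integral_finset_sum _ fun i _ =>
          (integrable_const (v i - b i)).indicator (hsets i)
    _ = ∑ i ∈ Finset.Icc 1 K, (μ {ω | β ω (K - i + 1) ≤ b i}).toReal * (v i - b i) := by
        refine Finset.sum_congr rfl fun i hi => ?_
        rw [integral_indicator_const _ (hsets i), smul_eq_mul]
        rfl
end

section
/- Bandit feedback observability in the uniform price auction: for sorted bids b and β, and each i ∈ {1,...,K}, the event {β_{K-i+1} ∈ (b_{i+1}, b_i]} is equal to the event {x(b,β) = i and p(b,β) ≠ b_{i+1}}, where x is the allocation and p the uniform price; hence the event is measurable with respect to (determined by) the pair (x(b,β), p(b,β)), and on this event p(b,β) = β_{K-i+1}. -/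
open scoped Classical

/-- Uniform price: the (K+1)-th highest bid overall. -/
noncomputable def price (K : ℕ) (b β : ℕ → ℝ) : ℝ :=
  max (b (alloc K b β + 1)) (β (K - alloc K b β + 1))

/-- Bandit-feedback observability in the uniform price auction: the event
`β (K-i+1) ∈ (b (i+1), b i]` coincides with the observable event
`x = i ∧ p ≠ b (i+1)`, and on this event the price equals `β (K-i+1)`. -/
theorem uniform_bandit_feedback (K : ℕ) (b β : ℕ → ℝ)
    (hb : ∀ i j, 1 ≤ i → i ≤ j → j ≤ K → b j ≤ b i)
    (hb01 : ∀ i, 1 ≤ i → i ≤ K → b i ∈ Set.Icc (0:ℝ) 1)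
    (hβ : ∀ i j, 1 ≤ i → i ≤ j → j ≤ K → β j ≤ β i)
    (hβ01 : ∀ i, 1 ≤ i → i ≤ K → β i ∈ Set.Icc (0:ℝ) 1)
    (hbK1 : b (K + 1) = 0)
    (i : ℕ) (hi1 : 1 ≤ i) (hiK : i ≤ K) :
    ((b (i + 1) < β (K - i + 1) ∧ β (K - i + 1) ≤ b i)
        ↔ (alloc K b β = i ∧ price K b β ≠ b (i + 1)))
      ∧ (b (i + 1) < β (K - i + 1) ∧ β (K - i + 1) ≤ b i → price K b β = β (K - i + 1)) := by
  -- Main claim: on the event, the allocation equals i.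
  have halloc : b (i + 1) < β (K - i + 1) → β (K - i + 1) ≤ b i → alloc K b β = i := by
    intro h1 h2
    have key := @Nat.findGreatest_eq_iff i K (fun k => ∀ j, 1 ≤ j → j ≤ k → β (K + 1 - j) ≤ b j)
      (fun _ => Classical.propDecidable _)
    rw [alloc, key]
    refine ⟨hiK, fun _ => ?_, fun n hn hnK hP => ?_⟩
    · intro j hj1 hji
      have hβj : β (K + 1 - j) ≤ β (K - i + 1) := by
        rcases eq_or_lt_of_le hji with rfl | hlt
        · have : K + 1 - j = K - j + 1 := by omega
          rw [this]
        · exact hβ (K - i + 1) (K + 1 - j) (by omega) (by omega) (by omega)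
      have hbj : b i ≤ b j := hb j i hj1 hji hiK
      linarith
    · have h3 : β (K + 1 - (i + 1)) ≤ b (i + 1) := hP (i + 1) (by omega) (by omega)
      have h4 : β (K - i + 1) ≤ β (K - i) := hβ (K - i) (K - i + 1) (by omega) (by omega) (by omega)
      have : K + 1 - (i + 1) = K - i := by omega
      rw [this] at h3
      linarith
  have hprice : b (i + 1) < β (K - i + 1) → β (K - i + 1) ≤ b i →
      price K b β = β (K - i + 1) := by
    intro h1 h2
    rw [price, halloc h1 h2]
    exact max_eq_right h1.le
  constructor
  · constructor
    · rintro ⟨h1, h2⟩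
      refine ⟨halloc h1 h2, ?_⟩
      rw [hprice h1 h2]
      exact h1.ne'
    · rintro ⟨ha, hp⟩
      rw [price, ha] at hp
      have h2 : β (K + 1 - i) ≤ b i := by
        have key := @Nat.findGreatest_eq_iff i K (fun k => ∀ j, 1 ≤ j → j ≤ k → β (K + 1 - j) ≤ b j)
          (fun _ => Classical.propDecidable _)
        rw [alloc, key] at ha
        exact ha.2.1 (by omega) i hi1 le_rfl
      have hi' : K + 1 - i = K - i + 1 := by omega
      rw [hi'] at h2
      refine ⟨?_, h2⟩
      by_contra h
      exact hp (max_eq_left (not_lt.1 h))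
  · rintro ⟨h1, h2⟩
    exact hprice h1 h2
end

section
/- Let F(b) = 1/(3(1−b)) for b ∈ [0, 1/3) and F(b) = 1/4 + 3b/4 for b ∈ [1/3, 1]. Then F is a valid CDF on [0,1] (non-decreasing, F(0) = 1/3 > 0 allowed as an atom at 0, F(1) = 1), and the first-price-auction expected utility G(b) := F(b)·(1 − b) (valuation v = 1) is constant and equal to 1/3 on [0, 1/3] and strictly decreasing on [1/3, 1]. -/
/-- The base adversary CDF for the hard first-price instance. -/
noncomputable def Fbase (b : ℝ) : ℝ :=
  if b < 1/3 then 1 / (3 * (1 - b)) else 1/4 + 3 * b / 4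

/-- `Fbase` is a valid CDF on `[0,1]` (non-decreasing, `F 0 = 1/3`, `F 1 = 1`) and
the first-price expected utility `F(b)(1-b)` is constant equal to `1/3` on `[0, 1/3]`
and strictly decreasing on `[1/3, 1]`. -/
theorem base_instance_properties :
    MonotoneOn Fbase (Set.Icc (0:ℝ) 1)
    ∧ Fbase 0 = 1/3
    ∧ Fbase 1 = 1
    ∧ (∀ b ∈ Set.Icc (0:ℝ) (1/3), Fbase b * (1 - b) = 1/3)
    ∧ StrictAntiOn (fun b : ℝ => Fbase b * (1 - b)) (Set.Icc (1/3 : ℝ) 1) := by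
  refine ⟨?_, ?_, ?_, ?_, ?_⟩
  · intro x hx y hy hxy
    simp only [Set.mem_Icc] at hx hy
    unfold Fbase
    by_cases hx3 : x < 1/3 <;> by_cases hy3 : y < 1/3
    · rw [if_pos hx3, if_pos hy3]
      have h1 : (0:ℝ) < 3 * (1 - x) := by nlinarith
      have h2 : (0:ℝ) < 3 * (1 - y) := by nlinarith
      rw [div_le_div_iff₀ h1 h2]; nlinarith
    · rw [if_pos hx3, if_neg hy3]
      have h1 : (0:ℝ) < 3 * (1 - x) := by nlinarith
      rw [div_le_iff₀ h1]
      push_neg at hy3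
      nlinarith
    · exact absurd (lt_of_le_of_lt hxy hy3) hx3
    · rw [if_neg hx3, if_neg hy3]; linarith
  · norm_num [Fbase]
  · norm_num [Fbase]
  · intro b hb
    simp only [Set.mem_Icc] at hb
    unfold Fbase
    by_cases h : b < 1/3
    · rw [if_pos h]
      have h0 : (3 * (1 - b)) ≠ 0 := by nlinarith
      have h0' : (1 - b) ≠ 0 := by nlinarith
      field_simp
    · have hb3 : b = 1/3 := le_antisymm hb.2 (not_lt.mp h)
      rw [if_neg h, hb3]; norm_num
  · intro x hx y hy hxy
    simp only [Set.mem_Icc] at hx hy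
    have hx3 : ¬ x < 1/3 := not_lt.mpr hx.1
    have hy3 : ¬ y < 1/3 := not_lt.mpr hy.1
    simp only [Fbase, if_neg hx3, if_neg hy3]
    nlinarith [hx.1, hy.2, hxy]
end
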